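/- Let (A, μ, α) be a Hom-power associative algebra over a field k of characteristic 0. Then A^+ = (A, ∗, α) with x ∗ y = (xy + yx)/2 is a commutative Hom-power associative algebra. -/

import Mathlib

variable {k A : Type*} [Field k] [CharZero k] [AddCommGroup A] [Module k A]

/-- The `n`-th Hom-power: `x^1 = x`, `x^n = x^{n-1} · α^{n-2}(x)`. -/
def homPow (μ : A →ₗ[k] A →ₗ[k] A) (α : A →ₗ[k] A) (x : A) : ℕ → A
  | 0 => x
  | 1 => x
  | n + 2 => μ (homPow μ α x (n + 1)) ((α ^ n) x)

/-- `A` is `n`-th Hom-power associative. -/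
def IsNthHomPowerAssoc (μ : A →ₗ[k] A →ₗ[k] A) (α : A →ₗ[k] A) (n : ℕ) : Prop :=
  ∀ (x : A) (i : ℕ), 1 ≤ i → i ≤ n - 1 →
    homPow μ α x n =
      μ ((α ^ (n - i - 1)) (homPow μ α x i)) ((α ^ (i - 1)) (homPow μ α x (n - i)))

/-- `A` is Hom-power associative. -/
def IsHomPowerAssoc (μ : A →ₗ[k] A →ₗ[k] A) (α : A →ₗ[k] A) : Prop :=
  ∀ n : ℕ, 2 ≤ n → IsNthHomPowerAssoc μ α n

/-- `A` is up to `n`-th Hom-power associative. -/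
def IsUpToNthHomPowerAssoc (μ : A →ₗ[k] A →ₗ[k] A) (α : A →ₗ[k] A) (n : ℕ) : Prop :=
  ∀ m : ℕ, 2 ≤ m → m ≤ n → IsNthHomPowerAssoc μ α m

/-- The Hom-algebra `(A, μ, α)` is multiplicative. -/
def IsMultiplicative (μ : A →ₗ[k] A →ₗ[k] A) (α : A →ₗ[k] A) : Prop :=
  ∀ x y : A, α (μ x y) = μ (α x) (α y)


lemma homPow_plus_eq (μ : A →ₗ[k] A →ₗ[k] A) (α : A →ₗ[k] A)
    (hpa : IsHomPowerAssoc μ α) (x : A) :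
    ∀ n : ℕ, homPow ((2 : k)⁻¹ • (μ + μ.flip)) α x n = homPow μ α x n := by
  intro n
  induction n using Nat.strong_induction_on with
  | _ n ih =>
    match n with
    | 0 => rfl
    | 1 => rfl
    | (m + 2) =>
      have h1 : homPow μ α x (m + 2) = μ (homPow μ α x (m + 1)) ((α ^ m) x) := rfl
      have h2 : μ ((α ^ m) x) (homPow μ α x (m + 1)) = homPow μ α x (m + 2) := by
        have := hpa (m + 2) (by omega) x 1 le_rfl (by omega)
        simpa [homPow] using this.symm
      show ((2 : k)⁻¹ • (μ + μ.flip)) (homPow ((2 : k)⁻¹ • (μ + μ.flip)) α x (m + 1)) ((α ^ m) x)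
          = homPow μ α x (m + 2)
      rw [ih (m + 1) (by omega)]
      simp only [LinearMap.smul_apply, LinearMap.add_apply, LinearMap.flip_apply]
      rw [← h1, h2, smul_add, ← two_smul k, smul_smul, mul_inv_cancel₀ (two_ne_zero (α := k)), one_smul]

theorem stmt5' (μ : A →ₗ[k] A →ₗ[k] A) (α : A →ₗ[k] A)
    (hpa : IsHomPowerAssoc μ α) :
    (∀ x y : A, ((2 : k)⁻¹ • (μ + μ.flip)) x y = ((2 : k)⁻¹ • (μ + μ.flip)) y x) ∧
    IsHomPowerAssoc ((2 : k)⁻¹ • (μ + μ.flip)) α := by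
  constructor
  · intro x y
    simp only [LinearMap.smul_apply, LinearMap.add_apply, LinearMap.flip_apply]
    rw [add_comm]
  · intro n hn x i hi1 hi2
    rw [homPow_plus_eq μ α hpa, homPow_plus_eq μ α hpa, homPow_plus_eq μ α hpa]
    have h1 := hpa n hn x i hi1 hi2
    have h2 := hpa n hn x (n - i) (by omega) (by omega)
    rw [show n - (n - i) = i by omega] at h2
    simp only [LinearMap.smul_apply, LinearMap.add_apply, LinearMap.flip_apply]
    
    rw [← h1, ← h2, ← two_smul k, smul_smul, inv_mul_cancel₀ (two_ne_zero (α := k)), one_smul]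

/-- Corollary: if `A` is Hom-power associative, then `A⁺ = (A, (μ+μᵒᵖ)/2, α)` is a
commutative Hom-power associative algebra. -/
theorem stmt5 (μ : A →ₗ[k] A →ₗ[k] A) (α : A →ₗ[k] A)
    (hpa : IsHomPowerAssoc μ α) :
    (∀ x y : A, ((2 : k)⁻¹ • (μ + μ.flip)) x y = ((2 : k)⁻¹ • (μ + μ.flip)) y x) ∧
    IsHomPowerAssoc ((2 : k)⁻¹ • (μ + μ.flip)) α :=
  stmt5' μ α hpa
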